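/- Let m, k be integers with 1 ≤ k ≤ m, let S be a nonempty subset of {1,...,k}, and let f_{(m,k)} be the associated function on 𝔽_3^m. Let u ∈ 𝔽_3 \ {0} and v ∈ 𝔽_3^m with wt(v) = i ≥ 1. Then, as integers: (a) the number of x ∈ 𝔽_3^m with u·f_{(m,k)}(x) + v·x = u equals 3^{m-1} + Σ_{t=1}^{k} K_t(i, m) - Σ_{t ∈ S} K_t(i, m); (b) the number of x ∈ 𝔽_3^m with u·f_{(m,k)}(x) + v·x = -u equals 3^{m-1} + Σ_{t ∈ S} K_t(i, m); (c) the number of x ∈ 𝔽_3^m with u·f_{(m,k)}(x) + v·x = 0 equals 3^{m-1} - Σ_{t=1}^{k} K_t(i, m). -/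

import Mathlib

open Finset

/-- The function `f_{(m,k)} : 𝔽_3^m → 𝔽_3` attached to a subset `S ⊆ {1,…,k}`:
`-1` if `wt(x) ∈ S`, `1` if `wt(x) ∈ {1,…,k} \ S`, `0` otherwise. -/
def fmk {m : ℕ} (k : ℕ) (S : Finset ℕ) (x : Fin m → ZMod 3) : ZMod 3 :=
  if hammingNorm x ∈ S then -1
  else if hammingNorm x ∈ Finset.Icc 1 k then 1
  else 0

/-- The ternary Krawtchouk polynomial
`K_t(i,m) = Σ_{j=0}^{t} (-1)^j·2^{t-j}·C(i,j)·C(m-i,t-j)`. -/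
def kraw (t i m : ℕ) : ℤ :=
  ∑ j ∈ Finset.range (t + 1),
    (-1 : ℤ) ^ j * 2 ^ (t - j) * (i.choose j : ℤ) * ((m - i).choose (t - j) : ℤ)

/-- For `1 ≤ k ≤ m`, `∅ ≠ S ⊆ {1,…,k}`, `u ∈ 𝔽_3 \ {0}` and
`v ∈ 𝔽_3^m` of Hamming weight `i ≥ 1`:
(a) `#{x : u·f(x) + v·x = u} = 3^{m-1} + Σ_{t=1}^{k} K_t(i,m) - Σ_{t ∈ S} K_t(i,m)`;
(b) `#{x : u·f(x) + v·x = -u} = 3^{m-1} + Σ_{t ∈ S} K_t(i,m)`;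
(c) `#{x : u·f(x) + v·x = 0} = 3^{m-1} - Σ_{t=1}^{k} K_t(i,m)`. -/
def Ncnt {m : ℕ} (v : Fin m → ZMod 3) (t : ℕ) (a : ZMod 3) : ℕ :=
  (univ.filter fun x : Fin m → ZMod 3 => hammingNorm x = t ∧ ∑ j, v j * x j = a).card

lemma hn_cons {m : ℕ} (a : ZMod 3) (y : Fin m → ZMod 3) :
    hammingNorm (Fin.cons a y : Fin (m+1) → ZMod 3) = (if a = 0 then 0 else 1) + hammingNorm y := by
  simp only [hammingNorm, Finset.card_filter]
  rw [Fin.sum_univ_succ]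
  simp [Fin.cons_zero, Fin.cons_succ, ite_not]

lemma card_filter_cons {m : ℕ} (P : (Fin (m+1) → ZMod 3) → Prop) [DecidablePred P] :
    (univ.filter P).card
      = ∑ a : ZMod 3, (univ.filter fun y : Fin m → ZMod 3 => P (Fin.cons a y)).card := by
  simp only [Finset.card_filter]
  rw [← (Fin.consEquiv (fun _ : Fin (m+1) => ZMod 3)).sum_comp (fun x => if P x then (1:ℕ) else 0)]
  rw [Fintype.sum_prod_type]
  rfl

lemma inner_cons {m : ℕ} (v : Fin (m+1) → ZMod 3) (a : ZMod 3) (y : Fin m → ZMod 3) :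
    (∑ j, v j * (Fin.cons a y : Fin (m+1) → ZMod 3) j)
      = v 0 * a + ∑ j, Fin.tail v j * y j := by
  rw [Fin.sum_univ_succ]
  simp [Fin.tail]

-- cons decomposition of Ncnt
lemma Ncnt_cons {m : ℕ} (v : Fin (m+1) → ZMod 3) (t : ℕ) (c : ZMod 3) :
    Ncnt v t c = ∑ a : ZMod 3,
      (univ.filter fun y : Fin m → ZMod 3 =>
        ((if a = 0 then 0 else 1) + hammingNorm y = t) ∧
        (∑ j, Fin.tail v j * y j) = c - v 0 * a).card := by
  rw [Ncnt, card_filter_cons]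
  refine Fintype.sum_congr _ _ fun a => ?_
  congr 1
  ext y
  simp only [mem_filter, hn_cons, inner_cons, mem_univ, true_and, eq_sub_iff_add_eq']

lemma sum_zmod3 {M : Type*} [AddCommMonoid M] (f : ZMod 3 → M) :
    ∑ a : ZMod 3, f a = f 0 + f 1 + f 2 := by
  rw [(by decide : (univ : Finset (ZMod 3)) = {0, 1, 2}), Finset.sum_insert (by decide),
    Finset.sum_insert (by decide), Finset.sum_singleton, add_assoc]

lemma Ncnt_cons_zero {m : ℕ} (v : Fin (m+1) → ZMod 3) (c : ZMod 3) :
    Ncnt v 0 c = Ncnt (Fin.tail v) 0 c := by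
  rw [Ncnt_cons, sum_zmod3]
  have h1 : ∀ a : ZMod 3, a ≠ 0 →
      (univ.filter fun y : Fin m → ZMod 3 =>
        ((if a = 0 then 0 else 1) + hammingNorm y = 0) ∧
        (∑ j, Fin.tail v j * y j) = c - v 0 * a).card = 0 := by
    intro a ha
    rw [Finset.card_eq_zero, Finset.filter_eq_empty_iff]
    intro y _
    simp [ha]
  rw [h1 1 (by decide), h1 2 (by decide)]
  simp [Ncnt]

lemma Ncnt_cons_succ {m : ℕ} (v : Fin (m+1) → ZMod 3) (t : ℕ) (c : ZMod 3) :
    Ncnt v (t+1) c = Ncnt (Fin.tail v) (t+1) c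
      + Ncnt (Fin.tail v) t (c - v 0) + Ncnt (Fin.tail v) t (c - 2 * v 0) := by
  have harith : ∀ n : ℕ, (1 + n = t + 1) ↔ (n = t) := by omega
  rw [Ncnt_cons, sum_zmod3]
  have h0 : (univ.filter fun y : Fin m → ZMod 3 =>
      ((if (0 : ZMod 3) = 0 then 0 else 1) + hammingNorm y = t + 1) ∧
      (∑ j, Fin.tail v j * y j) = c - v 0 * 0).card = Ncnt (Fin.tail v) (t+1) c := by
    unfold Ncnt; congr 1; ext y; simp
  have h1 : ∀ a : ZMod 3, a ≠ 0 →
      (univ.filter fun y : Fin m → ZMod 3 =>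
        ((if a = 0 then 0 else 1) + hammingNorm y = t + 1) ∧
        (∑ j, Fin.tail v j * y j) = c - v 0 * a).card = Ncnt (Fin.tail v) t (c - v 0 * a) := by
    intro a ha
    unfold Ncnt; congr 1; ext y
    simp only [mem_filter, mem_univ, true_and, if_neg ha, harith]
  rw [h0, h1 1 (by decide), h1 2 (by decide), mul_one]
  congr 1
  ring_nf

lemma hn_neg {m : ℕ} (x : Fin m → ZMod 3) : hammingNorm (-x) = hammingNorm x := by
  unfold hammingNorm
  congr 1
  ext j
  simp

lemma Ncnt_neg {m : ℕ} (v : Fin m → ZMod 3) (t : ℕ) (a : ZMod 3) :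
    Ncnt v t (-a) = Ncnt v t a := by
  unfold Ncnt
  apply Finset.card_equiv (Equiv.neg (Fin m → ZMod 3))
  intro x
  simp only [Equiv.neg_apply, mem_filter, mem_univ, true_and, hn_neg, Pi.neg_apply, mul_neg,
    Finset.sum_neg_distrib, neg_eq_iff_eq_neg]

lemma kraw_zero (i m : ℕ) : kraw 0 i m = 1 := by simp [kraw]

lemma K1 (t i m : ℕ) (h : i ≤ m) :
    kraw (t+1) i (m+1) = kraw (t+1) i m + 2 * kraw t i m := by
  unfold kraw
  have hmi : m + 1 - i = (m - i) + 1 := by omega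
  rw [hmi, Finset.sum_range_succ, Finset.sum_range_succ (n := t + 1), Finset.mul_sum]
  have key : ∀ j ∈ Finset.range (t+1),
      (-1 : ℤ) ^ j * 2 ^ (t + 1 - j) * (i.choose j : ℤ) * (((m - i) + 1).choose (t + 1 - j) : ℤ)
      = (-1 : ℤ) ^ j * 2 ^ (t + 1 - j) * (i.choose j : ℤ) * ((m - i).choose (t + 1 - j) : ℤ)
        + 2 * ((-1 : ℤ) ^ j * 2 ^ (t - j) * (i.choose j : ℤ) * ((m - i).choose (t - j) : ℤ)) := by
    intro j hj
    rw [Finset.mem_range] at hj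
    have h1 : t + 1 - j = (t - j) + 1 := by omega
    rw [h1, Nat.choose_succ_succ, pow_succ]
    push_cast; ring
  rw [Finset.sum_congr rfl key, Finset.sum_add_distrib]
  simp only [Nat.sub_self, pow_zero, Nat.choose_zero_right, Nat.cast_one, mul_one]
  ring

lemma K2 (t i m : ℕ) (h : i ≤ m) :
    kraw (t+1) (i+1) (m+1) = kraw (t+1) i m - kraw t i m := by
  unfold kraw
  have hmi : m + 1 - (i + 1) = m - i := by omega
  rw [hmi, Finset.sum_range_succ', Finset.sum_range_succ' (fun j =>
    (-1 : ℤ) ^ j * 2 ^ (t + 1 - j) * (i.choose j : ℤ) * ((m - i).choose (t + 1 - j) : ℤ)) (t+1)]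
  have key : ∀ j ∈ Finset.range (t+1),
      (-1 : ℤ) ^ (j+1) * 2 ^ (t + 1 - (j+1)) * ((i+1).choose (j+1) : ℤ) * ((m - i).choose (t + 1 - (j+1)) : ℤ)
      = (-1 : ℤ) ^ (j+1) * 2 ^ (t + 1 - (j+1)) * (i.choose (j+1) : ℤ) * ((m - i).choose (t + 1 - (j+1)) : ℤ)
        - (-1 : ℤ) ^ j * 2 ^ (t - j) * (i.choose j : ℤ) * ((m - i).choose (t - j) : ℤ) := by
    intro j hj
    have h1 : t + 1 - (j + 1) = t - j := by omega
    rw [h1, Nat.choose_succ_succ, pow_succ]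
    push_cast; ring
  rw [Finset.sum_congr rfl key, Finset.sum_sub_distrib]
  simp only [Nat.sub_zero, Nat.choose_zero_right]
  push_cast
  ring

lemma kraw_succ_zero_zero (t : ℕ) : kraw (t+1) 0 0 = 0 := by
  unfold kraw
  apply Finset.sum_eq_zero
  intro j hj
  rw [Finset.mem_range] at hj
  rcases Nat.eq_zero_or_pos j with h | h
  · subst h
    simp [Nat.choose_eq_zero_of_lt (by omega : (0:ℕ) < t + 1 - 0)]
  · have : (0:ℕ).choose j = 0 := Nat.choose_eq_zero_of_lt h
    simp [this]

lemma key : ∀ (m : ℕ) (v : Fin m → ZMod 3) (t : ℕ),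
    (Ncnt v t 0 : ℤ) - (Ncnt v t 1 : ℤ) = kraw t (hammingNorm v) m := by
  intro m
  induction m with
  | zero =>
    intro v t
    have hv : hammingNorm v = 0 := by simp [hammingNorm]
    have hN : ∀ x : Fin 0 → ZMod 3, hammingNorm x = 0 := fun x => by simp [hammingNorm]
    have hsum : ∀ x : Fin 0 → ZMod 3, (∑ j, v j * x j) = 0 := fun x => by simp
    rw [hv]
    rcases t with _ | t
    · have e0 : Ncnt v 0 0 = 1 := by
        unfold Ncnt
        rw [Finset.filter_true_of_mem (fun x _ => ⟨hN x, hsum x⟩)]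
        simp
      have e1 : Ncnt v 0 1 = 0 := by
        unfold Ncnt
        rw [Finset.card_eq_zero, Finset.filter_eq_empty_iff]
        intro x _
        simp [hsum x]
      rw [e0, e1, kraw_zero]
      norm_num
    · have e : ∀ a : ZMod 3, Ncnt v (t+1) a = 0 := by
        intro a
        unfold Ncnt
        rw [Finset.card_eq_zero, Finset.filter_eq_empty_iff]
        intro x _
        simp [hN x]
      rw [e 0, e 1, kraw_succ_zero_zero]
      norm_num
  | succ m ih =>
    intro v t
    have hvt : v = Fin.cons (v 0) (Fin.tail v) := (Fin.cons_self_tail v).symm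
    have hle : hammingNorm (Fin.tail v) ≤ m :=
      le_trans hammingNorm_le_card_fintype (by simp)
    have hnv : hammingNorm v = (if v 0 = 0 then 0 else 1) + hammingNorm (Fin.tail v) := by
      conv_lhs => rw [hvt]
      rw [hn_cons]
    rcases t with _ | t
    · rw [Ncnt_cons_zero, Ncnt_cons_zero, ih (Fin.tail v) 0, kraw_zero, kraw_zero]
    · by_cases hv0 : v 0 = 0
      · rw [Ncnt_cons_succ, Ncnt_cons_succ, hnv, if_pos hv0, hv0]
        simp only [mul_zero, sub_zero, zero_add]
        rw [K1 _ _ _ hle, ← ih (Fin.tail v) (t+1), ← ih (Fin.tail v) t]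
        push_cast
        ring
      · have h12 : v 0 = 1 ∨ v 0 = 2 :=
          (by decide : ∀ z : ZMod 3, z ≠ 0 → z = 1 ∨ z = 2) _ hv0
        rw [Ncnt_cons_succ, Ncnt_cons_succ, hnv, if_neg hv0, add_comm 1 (hammingNorm (Fin.tail v)),
          K2 _ _ _ hle, ← ih (Fin.tail v) (t+1), ← ih (Fin.tail v) t]
        rcases h12 with h | h <;> rw [h]
        · rw [(by decide : (0:ZMod 3) - 1 = 2), (by decide : (0:ZMod 3) - 2*1 = 1),
            (by decide : (1:ZMod 3) - 1 = 0), (by decide : (1:ZMod 3) - 2*1 = 2)]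
          push_cast
          ring
        · rw [(by decide : (0:ZMod 3) - 2 = 1), (by decide : (0:ZMod 3) - 2*2 = 2),
            (by decide : (1:ZMod 3) - 2 = 2), (by decide : (1:ZMod 3) - 2*2 = 0)]
          push_cast
          ring

lemma M_split {m : ℕ} (v : Fin m → ZMod 3) (T : Finset ℕ) (a : ZMod 3) :
    (univ.filter fun x : Fin m → ZMod 3 => hammingNorm x ∈ T ∧ (∑ j, v j * x j) = a).card
      = ∑ t ∈ T, Ncnt v t a := by
  unfold Ncnt
  rw [← Finset.card_biUnion]
  · congr 1
    ext x
    simp only [mem_biUnion, mem_filter, mem_univ, true_and]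
    constructor
    · rintro ⟨h1, h2⟩; exact ⟨_, h1, rfl, h2⟩
    · rintro ⟨t, ht, rfl, h2⟩; exact ⟨ht, h2⟩
  · intro t1 _ t2 _ hne
    apply Finset.disjoint_left.mpr
    intro x hx1 hx2
    simp only [mem_filter] at hx1 hx2
    exact hne (hx1.2.1 ▸ hx2.2.1)

lemma fiber_card {m : ℕ} (v : Fin m → ZMod 3) (j0 : Fin m) (hj0 : v j0 ≠ 0) (a b : ZMod 3) :
    (univ.filter fun x : Fin m → ZMod 3 => (∑ j, v j * x j) = a).card
      = (univ.filter fun x : Fin m → ZMod 3 => (∑ j, v j * x j) = b).card := by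
  obtain ⟨c, hc⟩ : ∃ c : ZMod 3, v j0 * c = b - a :=
    (by decide : ∀ z w : ZMod 3, z ≠ 0 → ∃ c, z * c = w) _ _ hj0
  apply Finset.card_nbij' (fun x => fun j => x j + if j = j0 then c else 0)
    (fun x => fun j => x j - if j = j0 then c else 0)
  · intro x hx
    simp only [mem_coe, mem_filter, mem_univ, true_and] at hx ⊢
    have : (∑ j, v j * (x j + if j = j0 then c else 0))
        = (∑ j, v j * x j) + v j0 * c := by
      simp [mul_add, Finset.sum_add_distrib, mul_ite, mul_zero, Finset.sum_ite_eq']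
    rw [this, hx, hc]; ring
  · intro x hx
    simp only [mem_coe, mem_filter, mem_univ, true_and] at hx ⊢
    have : (∑ j, v j * (x j - if j = j0 then c else 0))
        = (∑ j, v j * x j) - v j0 * c := by
      simp [mul_sub, Finset.sum_sub_distrib, mul_ite, mul_zero, Finset.sum_ite_eq']
    rw [this, hx, hc]; ring
  · intro x _; ext j; simp
  · intro x _; ext j; simp

lemma sum_zmod3' {M : Type*} [AddCommMonoid M] (f : ZMod 3 → M) :
    ∑ a : ZMod 3, f a = f 0 + f 1 + f 2 := by
  rw [(by decide : (univ : Finset (ZMod 3)) = {0, 1, 2}), Finset.sum_insert (by decide),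
    Finset.sum_insert (by decide), Finset.sum_singleton, add_assoc]

lemma fiber_card_eq {m : ℕ} (hm : 1 ≤ m) (v : Fin m → ZMod 3) (hv : v ≠ 0) (a : ZMod 3) :
    (univ.filter fun x : Fin m → ZMod 3 => (∑ j, v j * x j) = a).card = 3 ^ (m - 1) := by
  obtain ⟨j0, hj0⟩ : ∃ j, v j ≠ 0 := by
    by_contra h
    push_neg at h
    exact hv (funext h)
  have hm3 : (3:ℕ) ^ m = 3 * 3 ^ (m - 1) := by
    have hrw : m - 1 + 1 = m := by omega
    calc (3:ℕ) ^ m = 3 ^ (m - 1 + 1) := by rw [hrw]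
    _ = 3 * 3 ^ (m - 1) := by rw [pow_succ]; ring
  have h := Finset.card_eq_sum_card_fiberwise
    (s := (univ : Finset (Fin m → ZMod 3))) (t := (univ : Finset (ZMod 3)))
    (f := fun x : Fin m → ZMod 3 => ∑ j, v j * x j) (fun x _ => mem_univ _)
  have huniv : (univ : Finset (ZMod 3)) = {0, 1, 2} := by decide
  rw [huniv, Finset.sum_insert (by decide), Finset.sum_insert (by decide),
    Finset.sum_singleton, Finset.card_univ] at h
  have hcard : Fintype.card (Fin m → ZMod 3) = 3 ^ m := by simp
  rw [hcard, fiber_card v j0 hj0 0 a, fiber_card v j0 hj0 1 a, fiber_card v j0 hj0 2 a] at h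
  linarith

lemma main_split {m k : ℕ} (S : Finset ℕ) (hSsub : S ⊆ Finset.Icc 1 k)
    (u c : ZMod 3) (hu : u ≠ 0) (v : Fin m → ZMod 3) :
    (univ.filter fun x : Fin m → ZMod 3 => u * fmk k S x + ∑ j, v j * x j = c).card
      = (∑ t ∈ S, Ncnt v t (c + u))
        + (∑ t ∈ Finset.Icc 1 k \ S, Ncnt v t (c - u))
        + (∑ t ∈ Finset.range (m+1) \ Finset.Icc 1 k, Ncnt v t c) := by
  classical
  rw [← M_split, ← M_split, ← M_split]
  have hdisj1 : Disjoint
      (univ.filter fun x : Fin m → ZMod 3 =>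
        hammingNorm x ∈ S ∧ (∑ j, v j * x j) = c + u)
      (univ.filter fun x : Fin m → ZMod 3 =>
        hammingNorm x ∈ Finset.Icc 1 k \ S ∧ (∑ j, v j * x j) = c - u) := by
    apply Finset.disjoint_left.mpr
    intro x h1 h2
    simp only [mem_filter, mem_sdiff] at h1 h2
    exact h2.2.1.2 h1.2.1
  have hdisj2 : Disjoint
      ((univ.filter fun x : Fin m → ZMod 3 =>
        hammingNorm x ∈ S ∧ (∑ j, v j * x j) = c + u)
       ∪ (univ.filter fun x : Fin m → ZMod 3 =>
        hammingNorm x ∈ Finset.Icc 1 k \ S ∧ (∑ j, v j * x j) = c - u))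
      (univ.filter fun x : Fin m → ZMod 3 =>
        hammingNorm x ∈ Finset.range (m+1) \ Finset.Icc 1 k ∧ (∑ j, v j * x j) = c) := by
    apply Finset.disjoint_left.mpr
    intro x h1 h2
    simp only [mem_union, mem_filter, mem_sdiff, mem_range] at h1 h2
    rcases h1 with h1 | h1
    · exact h2.2.1.2 (hSsub h1.2.1)
    · exact h2.2.1.2 h1.2.1.1
  rw [← Finset.card_union_of_disjoint hdisj1, ← Finset.card_union_of_disjoint hdisj2]
  congr 1
  ext x
  have hxm : hammingNorm x ≤ m := le_trans hammingNorm_le_card_fintype (by simp)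
  simp only [mem_filter, mem_union, mem_sdiff, mem_univ, true_and, mem_range]
  simp only [fmk]
  by_cases h1 : hammingNorm x ∈ S
  · simp only [h1, if_true, hSsub h1, not_true, and_false, false_and, or_false, true_and,
      and_true]
    constructor <;> intro h <;> linear_combination h
  · by_cases h2 : hammingNorm x ∈ Finset.Icc 1 k
    · rw [if_neg h1, if_pos h2]
      simp only [h1, h2, not_true, false_and, and_false, not_false_iff, true_and, and_true,
        false_or, or_false]
      constructor <;> intro h <;> linear_combination h
    · rw [if_neg h1, if_neg h2]
      simp only [h1, h2, false_and, and_false, not_false_iff, true_and, and_true,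
        false_or, or_false, Nat.lt_succ_iff, hxm, mul_zero, zero_add]

theorem stmt_9 (m k : ℕ) (hk1 : 1 ≤ k) (hkm : k ≤ m)
    (S : Finset ℕ) (hS : S.Nonempty) (hSsub : S ⊆ Finset.Icc 1 k)
    (u : ZMod 3) (hu : u ≠ 0)
    (v : Fin m → ZMod 3) (i : ℕ) (hvi : hammingNorm v = i) (hi1 : 1 ≤ i) :
    (((Finset.univ.filter fun x : Fin m → ZMod 3 =>
        u * fmk k S x + ∑ j, v j * x j = u).card : ℤ)
      = 3 ^ (m - 1) + ∑ t ∈ Finset.Icc 1 k, kraw t i m - ∑ t ∈ S, kraw t i m)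
    ∧ (((Finset.univ.filter fun x : Fin m → ZMod 3 =>
        u * fmk k S x + ∑ j, v j * x j = -u).card : ℤ)
      = 3 ^ (m - 1) + ∑ t ∈ S, kraw t i m)
    ∧ (((Finset.univ.filter fun x : Fin m → ZMod 3 =>
        u * fmk k S x + ∑ j, v j * x j = 0).card : ℤ)
      = 3 ^ (m - 1) - ∑ t ∈ Finset.Icc 1 k, kraw t i m) := by
  subst hvi
  have hv0 : v ≠ 0 := by
    intro h
    rw [h, hammingNorm_zero] at hi1
    exact absurd hi1 (by norm_num)
  have him : hammingNorm v ≤ m := le_trans hammingNorm_le_card_fintype (by simp)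
  have hm1 : 1 ≤ m := le_trans hi1 him
  have htotal : ∀ a : ZMod 3, ∑ t ∈ Finset.range (m+1), Ncnt v t a = 3 ^ (m-1) := by
    intro a
    rw [← fiber_card_eq hm1 v hv0 a, ← M_split]
    congr 1
    ext x
    have hxm : hammingNorm x ≤ m := le_trans hammingNorm_le_card_fintype (by simp)
    simp only [mem_filter, mem_univ, true_and, mem_range, Nat.lt_succ_iff]
    tauto
  have hkey : ∀ T : Finset ℕ,
      (∑ t ∈ T, (Ncnt v t 0 : ℤ)) - ∑ t ∈ T, (Ncnt v t 1 : ℤ)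
        = ∑ t ∈ T, kraw t (hammingNorm v) m := by
    intro T
    rw [← Finset.sum_sub_distrib]
    exact Finset.sum_congr rfl fun t _ => key m v t
  have hnz : ∀ a : ZMod 3, a ≠ 0 → ∀ T : Finset ℕ,
      ∑ t ∈ T, Ncnt v t a = ∑ t ∈ T, Ncnt v t 1 := by
    intro a ha T
    rcases (by decide : ∀ z : ZMod 3, z ≠ 0 → z = 1 ∨ z = 2) a ha with h | h
    · rw [h]
    · rw [h]
      exact Finset.sum_congr rfl fun t _ => by
        rw [show (2 : ZMod 3) = -1 by decide, Ncnt_neg]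
  have hIccR : Finset.Icc 1 k ⊆ Finset.range (m+1) := by
    intro t ht
    rw [Finset.mem_range]
    rw [Finset.mem_Icc] at ht
    omega
  have hsplitS : ∀ g : ℕ → ℤ,
      ∑ t ∈ Finset.Icc 1 k \ S, g t + ∑ t ∈ S, g t = ∑ t ∈ Finset.Icc 1 k, g t :=
    fun g => Finset.sum_sdiff hSsub
  have hsplitI : ∀ g : ℕ → ℤ,
      ∑ t ∈ Finset.range (m+1) \ Finset.Icc 1 k, g t + ∑ t ∈ Finset.Icc 1 k, g t
        = ∑ t ∈ Finset.range (m+1), g t :=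
    fun g => Finset.sum_sdiff hIccR
  have ht0 : (∑ t ∈ Finset.range (m+1), (Ncnt v t 0 : ℤ)) = 3 ^ (m-1) := by
    rw [← Nat.cast_sum, htotal 0]
    push_cast
    ring
  have ht1 : (∑ t ∈ Finset.range (m+1), (Ncnt v t 1 : ℤ)) = 3 ^ (m-1) := by
    rw [← Nat.cast_sum, htotal 1]
    push_cast
    ring
  have hK0 : ∑ t ∈ Finset.range (m+1), kraw t (hammingNorm v) m = 0 := by
    rw [← hkey, ht0, ht1, sub_self]
  have e1 := hkey S
  have e2 := hkey (Finset.Icc 1 k \ S)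
  have e3 := hkey (Finset.range (m+1) \ Finset.Icc 1 k)
  have f0S := hsplitS (fun t => (Ncnt v t 0 : ℤ))
  have f1S := hsplitS (fun t => (Ncnt v t 1 : ℤ))
  have fkS := hsplitS (fun t => kraw t (hammingNorm v) m)
  have f0I := hsplitI (fun t => (Ncnt v t 0 : ℤ))
  have f1I := hsplitI (fun t => (Ncnt v t 1 : ℤ))
  have fkI := hsplitI (fun t => kraw t (hammingNorm v) m)
  refine ⟨?_, ?_, ?_⟩
  · rw [main_split S hSsub u u hu v, sub_self u,
      hnz (u + u) ((by decide : ∀ z : ZMod 3, z ≠ 0 → z + z ≠ 0) u hu) S,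
      hnz u hu (Finset.range (m+1) \ Finset.Icc 1 k)]
    push_cast
    linarith
  · rw [main_split S hSsub u (-u) hu v, neg_add_cancel,
      hnz (-u - u) ((by decide : ∀ z : ZMod 3, z ≠ 0 → -z - z ≠ 0) u hu) (Finset.Icc 1 k \ S),
      hnz (-u) (neg_ne_zero.mpr hu) (Finset.range (m+1) \ Finset.Icc 1 k)]
    push_cast
    linarith
  · rw [main_split S hSsub u 0 hu v, zero_add,
      hnz u hu S,
      hnz (0 - u) ((by decide : ∀ z : ZMod 3, z ≠ 0 → 0 - z ≠ 0) u hu) (Finset.Icc 1 k \ S)]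
    push_cast
    linarith
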